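/- Let ‖·‖ be a monotonic norm on ℝ^n with logarithmic norm μ, and for nonempty I ⊆ {1,…,n} let μ_I be the logarithmic norm of the norm ‖y‖_I = ‖pad_I(y)‖ on ℝ^{|I|}. Then for any A ∈ ℝ^{n×n}, μ_I(A_I) ≤ μ(A); in particular, if μ(A) < 0 then every principal submatrix of A is Hurwitz stable. -/

import Mathlib

/-- Spectral abscissa: supremum of real parts of (complex) eigenvalues. -/
noncomputable def specAbs {n : ℕ} (A : Matrix (Fin n) (Fin n) ℝ) : ℝ :=
  sSup {r : ℝ | ∃ μ : ℂ, μ ∈ spectrum ℂ (A.map (algebraMap ℝ ℂ)) ∧ r = μ.re}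

/-- Operator norm of a matrix induced by a given vector norm `N`. -/
noncomputable def opNorm {m : ℕ} (N : (Fin m → ℝ) → ℝ)
    (M : Matrix (Fin m) (Fin m) ℝ) : ℝ :=
  sSup {c : ℝ | ∃ x : Fin m → ℝ, N x = 1 ∧ c = N (M.mulVec x)}


open Filter Matrix

section auxnorm

variable {m : ℕ} {N : (Fin m → ℝ) → ℝ}

lemma myN_zero (hNsmul : ∀ (a : ℝ) x, N (a • x) = |a| * N x) : N 0 = 0 := by
  have := hNsmul 0 0
  simpa using this

lemma myN_nonneg (hNsmul : ∀ (a : ℝ) x, N (a • x) = |a| * N x)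
    (hNadd : ∀ x y, N (x + y) ≤ N x + N y) (x : Fin m → ℝ) : 0 ≤ N x := by
  have h1 : N ((-1 : ℝ) • x) = N x := by rw [hNsmul]; simp
  have h2 := hNadd x ((-1 : ℝ) • x)
  have h3 : x + (-1 : ℝ) • x = 0 := by module
  rw [h3, myN_zero hNsmul, h1] at h2
  linarith

lemma myN_sum_le (hNsmul : ∀ (a : ℝ) x, N (a • x) = |a| * N x)
    (hNadd : ∀ x y, N (x + y) ≤ N x + N y) {ι : Type*} (s : Finset ι)
    (g : ι → (Fin m → ℝ)) : N (∑ i ∈ s, g i) ≤ ∑ i ∈ s, N (g i) := by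
  classical
  induction s using Finset.cons_induction with
  | empty => simp [myN_zero hNsmul]
  | cons i s his ih =>
    rw [Finset.sum_cons, Finset.sum_cons]
    exact (hNadd _ _).trans (by linarith)

lemma myN_decomp (hNsmul : ∀ (a : ℝ) x, N (a • x) = |a| * N x)
    (hNadd : ∀ x y, N (x + y) ≤ N x + N y) (u : Fin m → ℝ) :
    N u ≤ ∑ j, |u j| * N (Pi.single j 1) := by
  have hu : u = ∑ j, u j • (Pi.single j 1 : Fin m → ℝ) := by
    funext i
    simp [Finset.sum_apply, Pi.single_apply]
  calc N u = N (∑ j, u j • (Pi.single j 1 : Fin m → ℝ)) := by rw [← hu]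
    _ ≤ ∑ j, N (u j • (Pi.single j 1 : Fin m → ℝ)) := myN_sum_le hNsmul hNadd _ _
    _ = ∑ j, |u j| * N (Pi.single j 1) := by simp [hNsmul]

lemma myN_single_pos (hN0 : ∀ x, N x = 0 ↔ x = 0)
    (hNsmul : ∀ (a : ℝ) x, N (a • x) = |a| * N x)
    (hNadd : ∀ x y, N (x + y) ≤ N x + N y) (j : Fin m) :
    0 < N (Pi.single j 1) := by
  rcases lt_or_eq_of_le (myN_nonneg hNsmul hNadd (Pi.single j 1)) with h | h
  · exact h
  · exfalso
    have : (Pi.single j 1 : Fin m → ℝ) = 0 := (hN0 _).mp h.symm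
    have := congrFun this j
    simp at this

lemma myN_coord_le (hN0 : ∀ x, N x = 0 ↔ x = 0)
    (hNsmul : ∀ (a : ℝ) x, N (a • x) = |a| * N x)
    (hNadd : ∀ x y, N (x + y) ≤ N x + N y)
    (hNmono : ∀ x y : Fin m → ℝ, (∀ i, |x i| ≤ |y i|) → N x ≤ N y)
    (u : Fin m → ℝ) (j : Fin m) : |u j| * N (Pi.single j 1) ≤ N u := by
  have h1 : N (u j • (Pi.single j 1 : Fin m → ℝ)) ≤ N u := by
    apply hNmono
    intro i
    rcases eq_or_ne i j with rfl | hij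
    · simp
    · simp [Pi.single_apply, hij]
  rwa [hNsmul] at h1

lemma myN_sub_le (hNsmul : ∀ (a : ℝ) x, N (a • x) = |a| * N x)
    (hNadd : ∀ x y, N (x + y) ≤ N x + N y) (u w : Fin m → ℝ) :
    N u - N w ≤ N (u - w) := by
  have := hNadd w (u - w)
  simp only [add_sub_cancel] at this
  linarith

lemma myN_continuous (hNsmul : ∀ (a : ℝ) x, N (a • x) = |a| * N x)
    (hNadd : ∀ x y, N (x + y) ≤ N x + N y) :
    Continuous N := by
  set C : ℝ := ∑ j, N (Pi.single j 1) with hC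
  have hC0 : 0 ≤ C := Finset.sum_nonneg fun j _ => myN_nonneg hNsmul hNadd _
  apply (LipschitzWith.of_dist_le_mul (K := C.toNNReal) (f := N) ?_).continuous
  have key : ∀ u w : Fin m → ℝ, N u - N w ≤ C * dist u w := by
    intro u w
    have h2 : N (u - w) ≤ ∑ j, |u j - w j| * N (Pi.single j 1) := by
      simpa using myN_decomp hNsmul hNadd (u - w)
    have h3 : ∑ j, |u j - w j| * N (Pi.single j 1) ≤ ∑ j, dist u w * N (Pi.single j 1) := by
      apply Finset.sum_le_sum
      intro j _
      apply mul_le_mul_of_nonneg_right _ (myN_nonneg hNsmul hNadd _)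
      calc |u j - w j| = dist (u j) (w j) := (Real.dist_eq _ _).symm
        _ ≤ dist u w := dist_le_pi_dist u w j
    have h4 : ∑ j, dist u w * N (Pi.single j 1) = C * dist u w := by
      rw [← Finset.mul_sum, hC, mul_comm]
    calc N u - N w ≤ N (u - w) := myN_sub_le hNsmul hNadd u w
      _ ≤ _ := h2.trans (h3.trans_eq h4)
  intro u w
  rw [Real.coe_toNNReal _ hC0, Real.dist_eq, abs_sub_le_iff]
  exact ⟨key u w, by simpa [dist_comm] using key w u⟩

end auxnorm

section auxop

variable {m : ℕ} {N : (Fin m → ℝ) → ℝ}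

lemma mulVec_decomp (M : Matrix (Fin m) (Fin m) ℝ) (x : Fin m → ℝ) :
    M.mulVec x = ∑ j, x j • (fun i => M i j) := by
  funext i
  simp [Matrix.mulVec, dotProduct, Finset.sum_apply, mul_comm]

lemma myOp_bddAbove (hN0 : ∀ x, N x = 0 ↔ x = 0)
    (hNsmul : ∀ (a : ℝ) x, N (a • x) = |a| * N x)
    (hNadd : ∀ x y, N (x + y) ≤ N x + N y)
    (hNmono : ∀ x y : Fin m → ℝ, (∀ i, |x i| ≤ |y i|) → N x ≤ N y)
    (M : Matrix (Fin m) (Fin m) ℝ) :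
    BddAbove {c : ℝ | ∃ x : Fin m → ℝ, N x = 1 ∧ c = N (M.mulVec x)} := by
  refine ⟨∑ j, (N (Pi.single j 1))⁻¹ * N (fun i => M i j), ?_⟩
  rintro c ⟨x, hx1, rfl⟩
  rw [mulVec_decomp]
  calc N (∑ j, x j • (fun i => M i j))
      ≤ ∑ j, N (x j • (fun i => M i j)) := myN_sum_le hNsmul hNadd _ _
    _ = ∑ j, |x j| * N (fun i => M i j) := by simp [hNsmul]
    _ ≤ ∑ j, (N (Pi.single j 1))⁻¹ * N (fun i => M i j) := by
        apply Finset.sum_le_sum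
        intro j _
        apply mul_le_mul_of_nonneg_right _ (myN_nonneg hNsmul hNadd _)
        have hpos := myN_single_pos hN0 hNsmul hNadd j
        have hco := myN_coord_le hN0 hNsmul hNadd hNmono x j
        rw [hx1] at hco
        rw [← one_div, le_div_iff₀ hpos]
        linarith

lemma myOp_nonneg (hNsmul : ∀ (a : ℝ) x, N (a • x) = |a| * N x)
    (hNadd : ∀ x y, N (x + y) ≤ N x + N y)
    (M : Matrix (Fin m) (Fin m) ℝ) : 0 ≤ opNorm N M := by
  rw [opNorm]; apply Real.sSup_nonneg
  rintro c ⟨x, hx1, rfl⟩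
  exact myN_nonneg hNsmul hNadd _

lemma myOp_le (hNsmul : ∀ (a : ℝ) x, N (a • x) = |a| * N x)
    (hNadd : ∀ x y, N (x + y) ≤ N x + N y)
    {M : Matrix (Fin m) (Fin m) ℝ} {c : ℝ}
    (h : ∀ x, N x = 1 → N (M.mulVec x) ≤ c) (hc : 0 ≤ c) : opNorm N M ≤ c := by
  rw [opNorm]; apply Real.sSup_le _ hc
  rintro d ⟨x, hx1, rfl⟩
  exact h x hx1

lemma myOp_ge (hN0 : ∀ x, N x = 0 ↔ x = 0)
    (hNsmul : ∀ (a : ℝ) x, N (a • x) = |a| * N x)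
    (hNadd : ∀ x y, N (x + y) ≤ N x + N y)
    (hNmono : ∀ x y : Fin m → ℝ, (∀ i, |x i| ≤ |y i|) → N x ≤ N y)
    {M : Matrix (Fin m) (Fin m) ℝ} {x : Fin m → ℝ}
    (hx1 : N x = 1) : N (M.mulVec x) ≤ opNorm N M :=
  le_csSup (myOp_bddAbove hN0 hNsmul hNadd hNmono M) ⟨x, hx1, rfl⟩

lemma myOp_mulVec_le (hN0 : ∀ x, N x = 0 ↔ x = 0)
    (hNsmul : ∀ (a : ℝ) x, N (a • x) = |a| * N x)
    (hNadd : ∀ x y, N (x + y) ≤ N x + N y)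
    (hNmono : ∀ x y : Fin m → ℝ, (∀ i, |x i| ≤ |y i|) → N x ≤ N y)
    (M : Matrix (Fin m) (Fin m) ℝ) (x : Fin m → ℝ) :
    N (M.mulVec x) ≤ opNorm N M * N x := by
  rcases eq_or_ne x 0 with rfl | hx
  · simp [Matrix.mulVec_zero, myN_zero hNsmul]
  · have ht : 0 < N x := by
      rcases lt_or_eq_of_le (myN_nonneg hNsmul hNadd x) with h | h
      · exact h
      · exact absurd ((hN0 x).mp h.symm) hx
    set u : Fin m → ℝ := (N x)⁻¹ • x with hu
    have hu1 : N u = 1 := by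
      rw [hu, hNsmul, abs_of_pos (inv_pos.mpr ht), inv_mul_cancel₀ ht.ne']
    have hxu : x = N x • u := by rw [hu]; rw [smul_smul]; rw [mul_inv_cancel₀ ht.ne', one_smul]
    calc N (M.mulVec x) = N (M.mulVec (N x • u)) := by rw [← hxu]
      _ = N (N x • M.mulVec u) := by rw [Matrix.mulVec_smul]
      _ = N x * N (M.mulVec u) := by rw [hNsmul, abs_of_pos ht]
      _ ≤ N x * opNorm N M := by
          exact mul_le_mul_of_nonneg_left (myOp_ge hN0 hNsmul hNadd hNmono hu1) ht.le
      _ = opNorm N M * N x := mul_comm _ _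

end auxop
section pad

variable {n k : ℕ} {f : Fin k → Fin n} (hf : Function.Injective f)
include hf

lemma pad_apply_mem (y : Fin k → ℝ) (i : Fin k) :
    Function.extend f y 0 (f i) = y i := by
  rw [Function.Injective.extend_apply hf]

omit hf in
lemma pad_apply_not_mem (y : Fin k → ℝ) {m : Fin n} (hm : ¬∃ i, f i = m) :
    Function.extend f y 0 m = 0 := by
  rw [Function.extend_apply' _ _ _ hm]
  rfl

lemma pad_zero : Function.extend f (0 : Fin k → ℝ) 0 = 0 := by
  funext m
  by_cases hm : ∃ i, f i = m
  · obtain ⟨i, rfl⟩ := hm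
    simp [pad_apply_mem hf]
  · simp [pad_apply_not_mem _ hm]

lemma pad_smul (a : ℝ) (y : Fin k → ℝ) :
    Function.extend f (a • y) 0 = a • Function.extend f y 0 := by
  funext m
  by_cases hm : ∃ i, f i = m
  · obtain ⟨i, rfl⟩ := hm
    simp [pad_apply_mem hf]
  · simp [pad_apply_not_mem _ hm]

lemma pad_add (y z : Fin k → ℝ) :
    Function.extend f (y + z) 0 = Function.extend f y 0 + Function.extend f z 0 := by
  funext m
  by_cases hm : ∃ i, f i = m
  · obtain ⟨i, rfl⟩ := hm
    simp [pad_apply_mem hf]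
  · simp [pad_apply_not_mem _ hm]

lemma pad_eq_zero_iff (y : Fin k → ℝ) :
    Function.extend f y 0 = 0 ↔ y = 0 := by
  constructor
  · intro h
    funext i
    have := congrFun h (f i)
    rwa [pad_apply_mem hf] at this
  · rintro rfl
    exact pad_zero hf

/-- sum over padded vector -/
lemma pad_dot (g : Fin n → ℝ) (y : Fin k → ℝ) :
    ∑ m, g m * Function.extend f y 0 m = ∑ j, g (f j) * y j := by
  classical
  have h1 : ∑ m, g m * Function.extend f y 0 m
      = ∑ m ∈ Finset.image f Finset.univ, g m * Function.extend f y 0 m := by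
    symm
    apply Finset.sum_subset (Finset.subset_univ _)
    intro m _ hm
    have hnm : ¬∃ i, f i = m := by
      rintro ⟨i, hi⟩
      exact hm (Finset.mem_image.mpr ⟨i, Finset.mem_univ i, hi⟩)
    rw [pad_apply_not_mem _ hnm, mul_zero]
  rw [h1, Finset.sum_image (fun x _ y _ h => hf h)]
  simp [pad_apply_mem hf]

end pad
section cmp

variable {n k : ℕ} {N : (Fin n → ℝ) → ℝ} {f : Fin k → Fin n}

lemma opNorm_pad_le (hN0 : ∀ x, N x = 0 ↔ x = 0)
    (hNsmul : ∀ (a : ℝ) x, N (a • x) = |a| * N x)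
    (hNadd : ∀ x y, N (x + y) ≤ N x + N y)
    (hNmono : ∀ x y : Fin n → ℝ, (∀ i, |x i| ≤ |y i|) → N x ≤ N y)
    (hf : Function.Injective f) (A : Matrix (Fin n) (Fin n) ℝ) (h : ℝ) :
    opNorm (fun y : Fin k → ℝ => N (Function.extend f y 0)) (1 + h • A.submatrix f f)
      ≤ opNorm N (1 + h • A) := by
  set Nk : (Fin k → ℝ) → ℝ := fun y => N (Function.extend f y 0) with hNk
  have hksmul : ∀ (a : ℝ) y, Nk (a • y) = |a| * Nk y := by
    intro a y; simp only [hNk]; rw [pad_smul hf, hNsmul]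
  have hkadd : ∀ y z, Nk (y + z) ≤ Nk y + Nk z := by
    intro y z; simp only [hNk]; rw [pad_add hf]; exact hNadd _ _
  apply myOp_le hksmul hkadd _ (myOp_nonneg hNsmul hNadd _)
  intro y hy1
  set x : Fin n → ℝ := Function.extend f y 0 with hx
  have hx1 : N x = 1 := hy1
  have key : ∀ mm : Fin n,
      |Function.extend f ((1 + h • A.submatrix f f).mulVec y) 0 mm|
        ≤ |((1 + h • A).mulVec x) mm| := by
    intro mm
    have hexp : ∀ z : Fin n → ℝ, (1 + h • A).mulVec z = z + h • A.mulVec z := by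
      intro z
      rw [Matrix.add_mulVec, Matrix.one_mulVec, Matrix.smul_mulVec]
    have hexpk : (1 + h • A.submatrix f f).mulVec y
        = y + h • (A.submatrix f f).mulVec y := by
      rw [Matrix.add_mulVec, Matrix.one_mulVec, Matrix.smul_mulVec]
    by_cases hm : ∃ i, f i = mm
    · obtain ⟨i, rfl⟩ := hm
      rw [pad_apply_mem hf]
      have hlhs : ((1 + h • A.submatrix f f).mulVec y) i
          = y i + h * ∑ j, A (f i) (f j) * y j := by
        rw [hexpk]
        simp [Matrix.mulVec, dotProduct, Matrix.submatrix_apply]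
      have hrhs : ((1 + h • A).mulVec x) (f i)
          = y i + h * ∑ j, A (f i) (f j) * y j := by
        rw [hexp]
        have hdot : (A.mulVec x) (f i) = ∑ j, A (f i) (f j) * y j := by
          simp only [Matrix.mulVec, dotProduct, hx]
          exact pad_dot hf _ y
        simp only [Pi.add_apply, Pi.smul_apply, hdot, smul_eq_mul, hx,
          pad_apply_mem hf]
        rw [← hx, hdot]
      rw [hlhs, hrhs]
    · rw [pad_apply_not_mem _ hm]
      simp
  calc Nk ((1 + h • A.submatrix f f).mulVec y)
      ≤ N ((1 + h • A).mulVec x) := hNmono _ _ key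
    _ ≤ opNorm N (1 + h • A) * N x :=
        myOp_mulVec_le hN0 hNsmul hNadd hNmono _ _
    _ = opNorm N (1 + h • A) := by rw [hx1, mul_one]

end cmp
section plane

variable {k : ℕ} {Nk : (Fin k → ℝ) → ℝ}

lemma plane_bound (hN0 : ∀ x, Nk x = 0 ↔ x = 0)
    (hNsmul : ∀ (a : ℝ) x, Nk (a • x) = |a| * Nk x)
    (hNadd : ∀ x y, Nk (x + y) ≤ Nk x + Nk y)
    (hNmono : ∀ x y : Fin k → ℝ, (∀ i, |x i| ≤ |y i|) → Nk x ≤ Nk y)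
    (M : Matrix (Fin k) (Fin k) ℝ) (α β : ℝ) (x y : Fin k → ℝ)
    (hxy : ¬(x = 0 ∧ y = 0))
    (hMx : M.mulVec x = α • x - β • y)
    (hMy : M.mulVec y = β • x + α • y)
    (h : ℝ) (hA0 : 0 < 1 + h * α) :
    1 + h * α ≤ opNorm Nk (1 + h • M) := by
  set A0 : ℝ := 1 + h * α with hA0def
  set B0 : ℝ := h * β with hB0def
  set r : ℝ := Real.sqrt (A0 ^ 2 + B0 ^ 2) with hrdef
  have hr2 : r ^ 2 = A0 ^ 2 + B0 ^ 2 := Real.sq_sqrt (by positivity)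
  have hrr : r * r = A0 ^ 2 + B0 ^ 2 := by nlinarith [hr2]
  have hrA : A0 ≤ r := by
    nlinarith [Real.sqrt_nonneg (A0 ^ 2 + B0 ^ 2), sq_nonneg B0, sq_nonneg (r - A0)]
  have hr : 0 < r := lt_of_lt_of_le hA0 hrA
  set W : ℝ × ℝ → (Fin k → ℝ) := fun p => p.1 • x + p.2 • y with hWdef
  have hW : ∀ p : ℝ × ℝ, (1 + h • M).mulVec (W p)
      = W (p.1 * A0 + p.2 * B0, p.2 * A0 - p.1 * B0) := by
    intro p
    have expand : (1 + h • M).mulVec (W p)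
        = W p + h • (p.1 • M.mulVec x + p.2 • M.mulVec y) := by
      rw [Matrix.add_mulVec, Matrix.one_mulVec, Matrix.smul_mulVec]
      congr 1
      rw [hWdef]
      simp only
      rw [Matrix.mulVec_add, Matrix.mulVec_smul, Matrix.mulVec_smul]
    rw [expand, hMx, hMy, hWdef]
    simp only [hA0def, hB0def]
    module
  set F : ℝ × ℝ → ℝ := fun p => Nk (W p) with hFdef
  have hWcont : Continuous W :=
    (continuous_fst.smul continuous_const).add (continuous_snd.smul continuous_const)
  have hFcont : Continuous F := (myN_continuous hNsmul hNadd).comp hWcont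
  set S : Set (ℝ × ℝ) := {p | p.1 ^ 2 + p.2 ^ 2 = 1} with hSdef
  have hSclosed : IsClosed S := by
    have : Continuous fun p : ℝ × ℝ => p.1 ^ 2 + p.2 ^ 2 := by continuity
    exact isClosed_eq this continuous_const
  have hScomp : IsCompact S := by
    apply (isCompact_closedBall (0 : ℝ × ℝ) 1).of_isClosed_subset hSclosed
    intro p hp
    have hp' : p.1 ^ 2 + p.2 ^ 2 = 1 := hp
    rw [Metric.mem_closedBall, dist_zero_right, Prod.norm_def]
    apply max_le
    · rw [Real.norm_eq_abs]
      nlinarith [sq_abs p.1, abs_nonneg p.1, sq_nonneg p.2]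
    · rw [Real.norm_eq_abs]
      nlinarith [sq_abs p.2, abs_nonneg p.2, sq_nonneg p.1]
  obtain ⟨pstar, hpS, hpmax⟩ :=
    hScomp.exists_isMaxOn ⟨((1 : ℝ), (0 : ℝ)), by simp [hSdef]⟩ hFcont.continuousOn
  have hpS' : pstar.1 ^ 2 + pstar.2 ^ 2 = 1 := hpS
  set q : ℝ × ℝ := (r⁻¹ * (pstar.1 * A0 - pstar.2 * B0),
    r⁻¹ * (pstar.2 * A0 + pstar.1 * B0)) with hqdef
  have hqS : q ∈ S := by
    show q.1 ^ 2 + q.2 ^ 2 = 1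
    have key : (pstar.1 * A0 - pstar.2 * B0) ^ 2 + (pstar.2 * A0 + pstar.1 * B0) ^ 2
        = A0 ^ 2 + B0 ^ 2 := by linear_combination (A0 ^ 2 + B0 ^ 2) * hpS'
    have : q.1 ^ 2 + q.2 ^ 2 = r⁻¹ ^ 2 * (A0 ^ 2 + B0 ^ 2) := by
      rw [hqdef]; ring_nf; linear_combination (r⁻¹ ^ 2) * key
    rw [this, ← hr2]
    field_simp
  have hT1 : q.1 * A0 + q.2 * B0 = r * pstar.1 := by
    calc q.1 * A0 + q.2 * B0 = r⁻¹ * (pstar.1 * (A0 ^ 2 + B0 ^ 2)) := by rw [hqdef]; ring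
      _ = r⁻¹ * (pstar.1 * (r * r)) := by rw [hrr]
      _ = r * pstar.1 := by field_simp
  have hT2 : q.2 * A0 - q.1 * B0 = r * pstar.2 := by
    calc q.2 * A0 - q.1 * B0 = r⁻¹ * (pstar.2 * (A0 ^ 2 + B0 ^ 2)) := by rw [hqdef]; ring
      _ = r⁻¹ * (pstar.2 * (r * r)) := by rw [hrr]
      _ = r * pstar.2 := by field_simp
  have hkey : (1 + h • M).mulVec (W q) = r • W pstar := by
    rw [hW q, hT1, hT2, hWdef]
    simp only
    module
  have hFnonneg : ∀ p, 0 ≤ F p := fun p => myN_nonneg hNsmul hNadd _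
  have hFq_pos : 0 < F q := by
    rcases (hFnonneg q).lt_or_eq with hlt | heq
    · exact hlt
    · exfalso
      have hWq : W q = 0 := (hN0 _).mp heq.symm
      have : r • W pstar = 0 := by rw [← hkey, hWq, Matrix.mulVec_zero]
      have hWp : W pstar = 0 := by
        rcases smul_eq_zero.mp this with h' | h'
        · exact absurd h' hr.ne'
        · exact h'
      have hFp : F pstar = 0 := by rw [hFdef]; simp only; rw [hWp]; exact (hN0 0).mpr rfl
      have hx0 : x = 0 := by
        have h10 : ((1 : ℝ), (0 : ℝ)) ∈ S := by simp [hSdef]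
        have h1x' : F ((1 : ℝ), (0 : ℝ)) ≤ F pstar := hpmax h10
        rw [hFp] at h1x'
        have h1x : Nk x ≤ 0 := by simpa [hFdef, hWdef] using h1x' 
        exact (hN0 x).mp (le_antisymm h1x (myN_nonneg hNsmul hNadd x))
      have hy0 : y = 0 := by
        have h01 : ((0 : ℝ), (1 : ℝ)) ∈ S := by simp [hSdef]
        have h1y' : F ((0 : ℝ), (1 : ℝ)) ≤ F pstar := hpmax h01
        rw [hFp] at h1y'
        have h1y : Nk y ≤ 0 := by simpa [hFdef, hWdef] using h1y' 
        exact (hN0 y).mp (le_antisymm h1y (myN_nonneg hNsmul hNadd y))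
      exact hxy ⟨hx0, hy0⟩
  set u : Fin k → ℝ := (F q)⁻¹ • W q with hudef
  have hu1 : Nk u = 1 := by
    rw [hudef, hNsmul, abs_of_pos (inv_pos.mpr hFq_pos)]
    exact inv_mul_cancel₀ hFq_pos.ne'
  have hval : Nk ((1 + h • M).mulVec u) = (F q)⁻¹ * (r * F pstar) := by
    rw [hudef, Matrix.mulVec_smul, hkey, hNsmul, hNsmul,
      abs_of_pos (inv_pos.mpr hFq_pos), abs_of_pos hr]
  have hge : r ≤ Nk ((1 + h • M).mulVec u) := by
    rw [hval]
    have hFpq : F q ≤ F pstar := hpmax hqS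
    rw [← sub_nonneg]
    have e : (F q)⁻¹ * (r * F pstar) - r = (F q)⁻¹ * r * (F pstar - F q) := by
      field_simp
    rw [e]
    exact mul_nonneg (mul_nonneg (inv_pos.mpr hFq_pos).le hr.le) (sub_nonneg.mpr hFpq)
  calc A0 ≤ r := hrA
    _ ≤ Nk ((1 + h • M).mulVec u) := hge
    _ ≤ opNorm Nk (1 + h • M) := myOp_ge hN0 hNsmul hNadd hNmono hu1

end plane
section eig

lemma eigen_decomp {k : ℕ} (M : Matrix (Fin k) (Fin k) ℝ) {μ : ℂ}
    (hμ : μ ∈ spectrum ℂ (M.map (algebraMap ℝ ℂ))) :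
    ∃ x y : Fin k → ℝ, ¬(x = 0 ∧ y = 0) ∧
      M.mulVec x = μ.re • x - μ.im • y ∧ M.mulVec y = μ.im • x + μ.re • y := by
  classical
  set M' := M.map (algebraMap ℝ ℂ) with hM'
  rw [spectrum.mem_iff] at hμ
  have hdet : (algebraMap ℂ (Matrix (Fin k) (Fin k) ℂ) μ - M').det = 0 := by
    by_contra hd
    exact hμ ((Matrix.isUnit_iff_isUnit_det _).mpr (isUnit_iff_ne_zero.mpr hd))
  obtain ⟨v, hv0, hv⟩ := (Matrix.exists_mulVec_eq_zero_iff).mpr hdet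
  have halg : algebraMap ℂ (Matrix (Fin k) (Fin k) ℂ) μ = μ • 1 :=
    Algebra.algebraMap_eq_smul_one μ
  have heig : M'.mulVec v = μ • v := by
    rw [halg, Matrix.sub_mulVec, Matrix.smul_mulVec, Matrix.one_mulVec,
      sub_eq_zero] at hv
    exact hv.symm
  have hcomp : ∀ i, ∑ j, (M i j : ℂ) * v j = μ * v i := by
    intro i
    have := congrFun heig i
    simpa [Matrix.mulVec, dotProduct, hM', Matrix.map_apply] using this
  refine ⟨fun i => (v i).re, fun i => (v i).im, ?_, ?_, ?_⟩
  · rintro ⟨hx, hy⟩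
    apply hv0
    funext i
    have h1 := congrFun hx i
    have h2 := congrFun hy i
    simp only [Pi.zero_apply] at h1 h2
    exact Complex.ext h1 h2
  · funext i
    have := congrArg Complex.re (hcomp i)
    simp only [Complex.re_sum, Complex.mul_re, Complex.ofReal_re, Complex.ofReal_im,
      zero_mul, sub_zero] at this
    simpa [Matrix.mulVec, dotProduct, Pi.smul_apply, smul_eq_mul, mul_comm] using this
  · funext i
    have := congrArg Complex.im (hcomp i)
    simp only [Complex.im_sum, Complex.mul_im, Complex.ofReal_re, Complex.ofReal_im,
      zero_mul, add_zero] at this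
    rw [add_comm] at this
    simpa [Matrix.mulVec, dotProduct, Pi.smul_apply, smul_eq_mul, mul_comm] using this

end eig

/-- For a monotonic norm on ℝⁿ, with `μ(A) = a` and `μ_I(A_I) = b` the
logarithmic norms (one-sided limits below), we have `μ_I(A_I) ≤ μ(A)`;
in particular `μ(A) < 0` implies the principal submatrix `A_I` is Hurwitz. -/
theorem logNorm_submatrix_le {n k : ℕ} (hk : 0 < k)
    (N : (Fin n → ℝ) → ℝ)
    (hN0 : ∀ x, N x = 0 ↔ x = 0)
    (hNsmul : ∀ (a : ℝ) x, N (a • x) = |a| * N x)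
    (hNadd : ∀ x y, N (x + y) ≤ N x + N y)
    (hNmono : ∀ x y : Fin n → ℝ, (∀ i, |x i| ≤ |y i|) → N x ≤ N y)
    (f : Fin k → Fin n) (hf : Function.Injective f)
    (A : Matrix (Fin n) (Fin n) ℝ) (a b : ℝ)
    (ha : Filter.Tendsto (fun h : ℝ => (opNorm N (1 + h • A) - 1) / h)
      (nhdsWithin 0 (Set.Ioi 0)) (nhds a))
    (hb : Filter.Tendsto
      (fun h : ℝ => (opNorm (fun y : Fin k → ℝ => N (Function.extend f y 0))
        (1 + h • A.submatrix f f) - 1) / h)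
      (nhdsWithin 0 (Set.Ioi 0)) (nhds b)) :
    b ≤ a ∧ (a < 0 → specAbs (A.submatrix f f) < 0) := by
  classical
  set Nk : (Fin k → ℝ) → ℝ := fun y => N (Function.extend f y 0) with hNkdef
  have hk0 : ∀ y, Nk y = 0 ↔ y = 0 := by
    intro y
    rw [hNkdef]
    simp only
    rw [hN0]
    exact pad_eq_zero_iff hf y
  have hksmul : ∀ (c : ℝ) y, Nk (c • y) = |c| * Nk y := by
    intro c y; simp only [hNkdef]; rw [pad_smul hf, hNsmul]
  have hkadd : ∀ y z, Nk (y + z) ≤ Nk y + Nk z := by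
    intro y z; simp only [hNkdef]; rw [pad_add hf]; exact hNadd _ _
  have hkmono : ∀ y z : Fin k → ℝ, (∀ i, |y i| ≤ |z i|) → Nk y ≤ Nk z := by
    intro y z hyz
    simp only [hNkdef]
    apply hNmono
    intro m
    by_cases hm : ∃ i, f i = m
    · obtain ⟨i, rfl⟩ := hm
      rw [pad_apply_mem hf, pad_apply_mem hf]
      exact hyz i
    · rw [pad_apply_not_mem _ hm, pad_apply_not_mem _ hm]
  have part1 : b ≤ a := by
    apply le_of_tendsto_of_tendsto hb ha
    filter_upwards [self_mem_nhdsWithin] with h hh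
    have hhpos : (0 : ℝ) < h := hh
    have hcmp := opNorm_pad_le hN0 hNsmul hNadd hNmono hf A h
    gcongr
  refine ⟨part1, fun haneg => ?_⟩
  have hspecle : ∀ μ : ℂ,
      μ ∈ spectrum ℂ ((A.submatrix f f).map (algebraMap ℝ ℂ)) → μ.re ≤ b := by
    intro μ hμ
    obtain ⟨x, y, hxy, hMx, hMy⟩ := eigen_decomp (A.submatrix f f) hμ
    apply ge_of_tendsto hb
    have hδ : (0 : ℝ) < 1 / (|μ.re| + 1) := by positivity
    filter_upwards [Ioo_mem_nhdsGT_of_mem (Set.left_mem_Ico.mpr hδ)] with h hh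
    have hhpos : 0 < h := hh.1
    have hhlt : h < 1 / (|μ.re| + 1) := hh.2
    have hA0 : 0 < 1 + h * μ.re := by
      have h1 : h * (|μ.re| + 1) < 1 := by
        rw [← lt_div_iff₀ (by positivity)] at *
        exact hhlt
      nlinarith [neg_abs_le μ.re, abs_nonneg μ.re]
    have hbound := plane_bound hk0 hksmul hkadd hkmono (A.submatrix f f)
      μ.re μ.im x y hxy hMx hMy h hA0
    rw [le_div_iff₀ hhpos]
    linarith
  haveI : Nonempty (Fin k) := ⟨⟨0, hk⟩⟩
  have hne : {r : ℝ | ∃ μ : ℂ,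
      μ ∈ spectrum ℂ ((A.submatrix f f).map (algebraMap ℝ ℂ)) ∧ r = μ.re}.Nonempty := by
    obtain ⟨μ, hμ⟩ := spectrum.nonempty_of_isAlgClosed_of_finiteDimensional ℂ
      ((A.submatrix f f).map (algebraMap ℝ ℂ))
    exact ⟨μ.re, μ, hμ, rfl⟩
  have hsle : specAbs (A.submatrix f f) ≤ b := by
    rw [specAbs]
    apply csSup_le hne
    rintro r ⟨μ, hμ, rfl⟩
    exact hspecle μ hμ
  linarith
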